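/- For each r ≥ 3, let Y_r be the truncation to rank r of the parallel connection, across a basepoint p, of two r-element circuits. Then Y_r is not laminar, but every single-element deletion and every single-element contraction of Y_r is laminar. That is, Y_r is an excluded minor for the class of laminar matroids. -/

import Mathlib

open Set Matroid

variable {α : Type*}

/-- A circuit: a minimal dependent set. -/
def Matroid.IsCircuit' (M : Matroid α) (C : Set α) : Prop :=
  M.Dep C ∧ ∀ D, D ⊂ C → M.Indep D

/-- The circuit characterization of laminar matroids. -/
def Matroid.IsLaminar (M : Matroid α) : Prop :=
  ∀ C₁ C₂, M.IsCircuit' C₁ → M.IsCircuit' C₂ → (C₁ ∩ C₂).Nonempty →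
    M.closure C₁ ⊆ M.closure C₂ ∨ M.closure C₂ ⊆ M.closure C₁

/-- A laminar family: any two intersecting members are comparable. -/
def IsLaminarFamily (𝒜 : Set (Set α)) : Prop :=
  ∀ A ∈ 𝒜, ∀ B ∈ 𝒜, (A ∩ B).Nonempty → A ⊆ B ∨ B ⊆ A

/-- `M` is presented by the laminar family `𝒜` with capacities `c`. -/
def Matroid.IsLaminarPresBy (M : Matroid α) (E : Set α) (𝒜 : Set (Set α)) (c : Set α → ℕ) :
    Prop :=
  M.E = E ∧ ∀ I, M.Indep I ↔ I ⊆ E ∧ ∀ A ∈ 𝒜, (I ∩ A).ncard ≤ c A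

/-- `M` has some laminar presentation (on its own ground set); this captures being
isomorphic to a laminar matroid `M(E, 𝒜, c)`. -/
def Matroid.HasLaminarPres (M : Matroid α) : Prop :=
  ∃ (𝒜 : Set (Set α)) (c : Set α → ℕ), IsLaminarFamily 𝒜 ∧ (∀ A ∈ 𝒜, A ⊆ M.E) ∧
    M.IsLaminarPresBy M.E 𝒜 c

/-- Deletion of a set of elements. -/
def Matroid.del (M : Matroid α) (X : Set α) : Matroid α := M ↾ (M.E \ X)

/-- Contraction of a set of elements, defined via duality. -/
def Matroid.con (M : Matroid α) (X : Set α) : Matroid α := (M✶ ↾ (M.E \ X))✶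

/-- `IsMinor M N` means `N` is obtained from `M` by a sequence of single-element
deletions and contractions. -/
inductive IsMinor : Matroid α → Matroid α → Prop
  | refl (M : Matroid α) : IsMinor M M
  | del (M N : Matroid α) (e : α) : IsMinor M N → IsMinor M (N.del {e})
  | con (M N : Matroid α) (e : α) : IsMinor M N → IsMinor M (N.con {e})

/-- `YrSpec N r C₁ C₂` says that `N` is (isomorphic to) the matroid `Y_r`: the truncation
to rank `r` of the parallel connection of the two `r`-element circuits `C₁` and `C₂`,
which meet in a single basepoint. -/
def YrSpec (N : Matroid α) (r : ℕ) (C₁ C₂ : Set α) : Prop :=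
  C₁.Finite ∧ C₂.Finite ∧ C₁.ncard = r ∧ C₂.ncard = r ∧ (C₁ ∩ C₂).ncard = 1 ∧
  N.E = C₁ ∪ C₂ ∧
  ∀ I, N.Indep I ↔ I ⊆ C₁ ∪ C₂ ∧ I.ncard ≤ r ∧ ¬ C₁ ⊆ I ∧ ¬ C₂ ⊆ I

/-! ### Auxiliary lemmas -/

/-- Key criterion: if the independent sets are exactly the small subsets of the ground set
avoiding each member of a "pairwise disjoint" family `𝒟`, then the matroid is laminar:
every circuit is either a member of `𝒟` or spanning. -/
lemma key_laminar {M : Matroid α} {k : ℕ} (hE : M.E.Finite) {𝒟 : Set (Set α)}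
    (hdisj : ∀ D ∈ 𝒟, ∀ D' ∈ 𝒟, (D ∩ D').Nonempty → D = D')
    (hI : ∀ I, M.Indep I ↔ I ⊆ M.E ∧ I.ncard ≤ k ∧ ∀ D ∈ 𝒟, ¬ D ⊆ I) :
    M.IsLaminar := by
  have hclass : ∀ C, M.IsCircuit' C → C ∈ 𝒟 ∨ M.closure C = M.E := by
    rintro C ⟨hdep, hmin⟩
    have hCE : C ⊆ M.E := hdep.subset_ground
    have hCfin : C.Finite := hE.subset hCE
    have hnind : ¬ M.Indep C := hdep.not_indep
    by_cases hD : ∃ D ∈ 𝒟, D ⊆ C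
    · left
      obtain ⟨D, hD𝒟, hDC⟩ := hD
      have hDC' : D = C := by
        by_contra hne
        have hind := hmin D (hDC.ssubset_of_ne hne)
        rw [hI] at hind
        exact hind.2.2 D hD𝒟 Subset.rfl
      exact hDC' ▸ hD𝒟
    · right
      push_neg at hD
      have hk : k < C.ncard := by
        by_contra h'
        push_neg at h'
        exact hnind ((hI C).mpr ⟨hCE, h', hD⟩)
      obtain ⟨I, hIC, hIcard⟩ := Set.exists_subset_card_eq hk.le
      have hIfin : I.Finite := hCfin.subset hIC
      have hIne : I ≠ C := fun h => by rw [h] at hIcard; omega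
      have hIind : M.Indep I := hmin I (hIC.ssubset_of_ne hIne)
      refine subset_antisymm (M.closure_subset_ground C) fun x hx => ?_
      by_cases hxC : x ∈ C
      · exact M.subset_closure C hCE hxC
      · have hxI : x ∉ I := fun h => hxC (hIC h)
        have hxcl : x ∈ M.closure I := by
          rw [hIind.mem_closure_iff]
          left
          refine ⟨fun h => ?_, insert_subset hx (hIC.trans hCE)⟩
          rw [hI] at h
          have := h.2.1
          rw [Set.ncard_insert_of_notMem hxI hIfin, hIcard] at this
          omega
        exact M.closure_subset_closure hIC hxcl
  intro A B hA hB hAB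
  rcases hclass A hA with hA' | hA'
  · rcases hclass B hB with hB' | hB'
    · rw [hdisj A hA' B hB' hAB]
      exact Or.inl Subset.rfl
    · exact Or.inl (hB' ▸ M.closure_subset_ground A)
  · exact Or.inr (hA' ▸ M.closure_subset_ground B)

/-- Independence in a single-element contraction (of a non-loop element). -/
lemma con_indep_iff {M : Matroid α} {e : α} (he : M.Indep {e}) (I : Set α) :
    (M.con {e}).Indep I ↔ I ⊆ M.E \ {e} ∧ M.Indep (insert e I) := by
  have heE : e ∈ M.E := singleton_subset_iff.mp he.subset_ground
  have hXE : M.E \ {e} ⊆ M✶.E := by rw [dual_ground]; exact diff_subset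
  rw [Matroid.con, dual_indep_iff_exists', restrict_ground_eq]
  constructor
  · rintro ⟨hIX, B, hB, hdis⟩
    rw [isBase_restrict_iff hXE] at hB
    have hsp : M✶.Spanning (M.E \ {e}) := by
      have hcompl : M✶.E \ (M.E \ {e}) = {e} := by
        rw [dual_ground]
        ext x
        simp only [mem_diff, mem_singleton_iff]
        constructor
        · rintro ⟨hxE, hx⟩
          by_contra h
          exact hx ⟨hxE, h⟩
        · rintro rfl
          exact ⟨heE, fun h => h.2 rfl⟩
      rw [spanning_iff_compl_coindep hXE, hcompl, dual_coindep_iff]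
      exact he
    have hBbase : M✶.IsBase B := by
      refine hB.indep.isBase_of_spanning ⟨?_, hB.left_subset_ground⟩
      rw [hB.closure_eq_closure, hsp.closure_eq]
    have hD : M.IsBase (M.E \ B) := hBbase.compl_isBase_of_dual
    refine ⟨hIX, hD.indep.subset (insert_subset ⟨heE, fun h => (hB.subset h).2 rfl⟩
      fun x hx => ⟨(hIX hx).1, fun hB' => (disjoint_left.mp hdis hx) hB'⟩)⟩
  · rintro ⟨hIX, hind⟩
    obtain ⟨B₀, hB₀, hsub⟩ := hind.exists_isBase_superset
    have heB₀ : e ∈ B₀ := hsub (mem_insert e I)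
    refine ⟨hIX, M.E \ B₀, ?_, ?_⟩
    · rw [isBase_restrict_iff hXE]
      have hb : M✶.IsBase (M.E \ B₀) := hB₀.compl_isBase_dual
      have hbg := hb.isBasis_ground
      rw [dual_ground] at hbg
      exact hbg.isBasis_subset (fun x hx => ⟨hx.1, fun hxe => hx.2 (hxe ▸ heB₀)⟩) diff_subset
    · exact disjoint_left.mpr fun x hx h => h.2 (hsub (subset_insert e I hx))

lemma yrSymm {N : Matroid α} {r : ℕ} {C₁ C₂ : Set α} (hY : YrSpec N r C₁ C₂) :
    YrSpec N r C₂ C₁ := by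
  obtain ⟨h1, h2, h3, h4, h5, h6, h7⟩ := hY
  refine ⟨h2, h1, h4, h3, by rwa [inter_comm], by rwa [union_comm], fun I => ?_⟩
  rw [h7 I, union_comm]
  tauto

lemma yrDiff {N : Matroid α} {r : ℕ} {C₁ C₂ : Set α} (hY : YrSpec N r C₁ C₂) :
    (C₁ \ C₂).ncard = r - 1 := by
  obtain ⟨hf1, -, hc1, -, hcap, -, -⟩ := hY
  have h' : C₁ \ C₂ = C₁ \ (C₁ ∩ C₂) := by
    ext z; simp only [mem_diff, mem_inter_iff]; tauto
  rw [h', Set.ncard_diff inter_subset_left (hf1.subset inter_subset_left), hc1, hcap]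

lemma yrCirc {N : Matroid α} {r : ℕ} {C₁ C₂ : Set α} (hr : 3 ≤ r)
    (hY : YrSpec N r C₁ C₂) : N.IsCircuit' C₁ := by
  obtain ⟨hf1, hf2, hc1, hc2, hcap, hE, hNI⟩ := hY
  have hC₁E : C₁ ⊆ N.E := hE ▸ subset_union_left
  constructor
  · exact ⟨fun h => ((hNI C₁).mp h).2.2.1 Subset.rfl, hC₁E⟩
  · intro D hD
    rw [hNI]
    refine ⟨hD.subset.trans subset_union_left, ?_, fun h => hD.not_subset h, fun h => ?_⟩
    · have hlt := Set.ncard_lt_ncard hD hf1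
      rw [hc1] at hlt
      omega
    · have hsub : C₂ ⊆ C₁ ∩ C₂ := subset_inter (h.trans hD.subset) Subset.rfl
      have hle := Set.ncard_le_ncard hsub (hf1.subset inter_subset_left)
      rw [hc2, hcap] at hle
      omega

lemma yrNotCl {N : Matroid α} {r : ℕ} {C₁ C₂ : Set α} (hr : 3 ≤ r)
    (hY : YrSpec N r C₁ C₂) {x : α} (hx1 : x ∈ C₁) (hx2 : x ∉ C₂) :
    x ∉ N.closure C₂ := by
  have hd1 : (C₁ \ C₂).ncard = r - 1 := yrDiff hY
  have hd2 : (C₂ \ C₁).ncard = r - 1 := yrDiff (yrSymm hY)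
  obtain ⟨hf1, hf2, hc1, hc2, hcap, hE, hNI⟩ := hY
  have hC₂E : C₂ ⊆ N.E := hE ▸ subset_union_right
  obtain ⟨y, hyC₂, hyC₁⟩ : (C₂ \ C₁).Nonempty :=
    Set.nonempty_of_ncard_ne_zero (by omega)
  set I := C₂ \ {y} with hIdef
  have hIC₂ : I ⊆ C₂ := diff_subset
  have hIfin : I.Finite := hf2.subset hIC₂
  have hIcard : I.ncard = r - 1 := by
    rw [hIdef, Set.ncard_diff_singleton_of_mem hyC₂, hc2]
  have hyI : y ∉ I := fun h => h.2 rfl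
  have hIind : N.Indep I := by
    rw [hNI]
    exact ⟨hIC₂.trans subset_union_right, by omega,
      fun h => hx2 (hIC₂ (h hx1)), fun h => hyI (h hyC₂)⟩
  have hC₂cl : C₂ ⊆ N.closure I := by
    intro t ht
    by_cases hty : t = y
    · subst hty
      rw [hIind.mem_closure_iff]
      left
      have hins : insert t I = C₂ := by
        rw [hIdef, Set.insert_diff_singleton, insert_eq_self.mpr ht]
      rw [hins]
      exact ⟨fun h => ((hNI C₂).mp h).2.2.2 Subset.rfl, hC₂E⟩
    · exact N.subset_closure I (hIC₂.trans hC₂E) ⟨ht, by simp [hty]⟩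
  have hclsub : N.closure C₂ ⊆ N.closure I := by
    have h' := N.closure_subset_closure hC₂cl
    rwa [Matroid.closure_closure] at h'
  intro hx
  have hx' := hclsub hx
  rw [hIind.mem_closure_iff] at hx'
  have hxI : x ∉ I := fun h => hx2 (hIC₂ h)
  rcases hx' with hdep | hmem
  · apply hdep.not_indep
    rw [hNI]
    obtain ⟨z, hz, hzx⟩ := Set.exists_ne_of_one_lt_ncard (by omega : 1 < (C₁ \ C₂).ncard) x
    refine ⟨insert_subset (Or.inl hx1) (hIC₂.trans subset_union_right), ?_, fun h => ?_,
      fun h => ?_⟩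
    · rw [Set.ncard_insert_of_notMem hxI hIfin, hIcard]; omega
    · rcases mem_insert_iff.mp (h hz.1) with h' | h'
      · exact hzx h'
      · exact hz.2 (hIC₂ h')
    · rcases mem_insert_iff.mp (h hyC₂) with h' | h'
      · exact hx2 (h' ▸ hyC₂)
      · exact hyI h'
  · exact hxI hmem

theorem stmt_15 (N : Matroid α) (r : ℕ) (hr : 3 ≤ r) (C₁ C₂ : Set α)
    (hY : YrSpec N r C₁ C₂) :
    ¬ N.IsLaminar ∧ ∀ e ∈ N.E, (N.del {e}).IsLaminar ∧ (N.con {e}).IsLaminar := by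
  obtain ⟨hf1, hf2, hc1, hc2, hcap, hE, hNI⟩ := id hY
  obtain ⟨p, hp⟩ := Set.ncard_eq_one.mp hcap
  have hpmem : p ∈ C₁ ∩ C₂ := by rw [hp]; exact rfl
  have hEfin : N.E.Finite := by rw [hE]; exact hf1.union hf2
  constructor
  · -- not laminar
    intro hlam
    obtain ⟨x, hx⟩ : (C₁ \ C₂).Nonempty :=
      Set.nonempty_of_ncard_ne_zero (by rw [yrDiff hY]; omega)
    obtain ⟨x', hx'⟩ : (C₂ \ C₁).Nonempty :=
      Set.nonempty_of_ncard_ne_zero (by rw [yrDiff (yrSymm hY)]; omega)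
    rcases hlam C₁ C₂ (yrCirc hr hY) (yrCirc hr (yrSymm hY)) ⟨p, hpmem⟩ with h | h
    · exact (yrNotCl hr hY hx.1 hx.2)
        (h (N.subset_closure C₁ (hE ▸ subset_union_left) hx.1))
    · exact (yrNotCl hr (yrSymm hY) hx'.1 hx'.2)
        (h (N.subset_closure C₂ (hE ▸ subset_union_right) hx'.1))
  · intro e he
    have heE' : e ∈ C₁ ∪ C₂ := hE ▸ he
    constructor
    · -- deletion
      apply key_laminar (k := r) (𝒟 := {D | (D = C₁ ∧ e ∉ C₁) ∨ (D = C₂ ∧ e ∉ C₂)})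
      · have hg : (N.del {e}).E = N.E \ {e} := rfl
        rw [hg]
        exact hEfin.diff
      · rintro D (⟨rfl, h1⟩ | ⟨rfl, h1⟩) D' (⟨rfl, h2⟩ | ⟨rfl, h2⟩) hne
        · rfl
        · exact absurd heE' fun h => h.elim h1 h2
        · exact absurd heE' fun h => h.elim h2 h1
        · rfl
      · intro I
        have hg : (N.del {e}).E = N.E \ {e} := rfl
        rw [hg]
        simp only [Matroid.del, restrict_indep_iff, hNI]
        constructor
        · rintro ⟨⟨hsub, hcard, h1, h2⟩, hIe⟩
          refine ⟨hIe, hcard, ?_⟩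
          rintro D (⟨rfl, -⟩ | ⟨rfl, -⟩)
          exacts [h1, h2]
        · rintro ⟨hIe, hcard, hD⟩
          have hIE : I ⊆ C₁ ∪ C₂ := fun x hx => hE ▸ (hIe hx).1
          refine ⟨⟨hIE, hcard, ?_, ?_⟩, hIe⟩
          · by_cases h1 : e ∈ C₁
            · exact fun h => (hIe (h h1)).2 rfl
            · exact hD C₁ (Or.inl ⟨rfl, h1⟩)
          · by_cases h2 : e ∈ C₂
            · exact fun h => (hIe (h h2)).2 rfl
            · exact hD C₂ (Or.inr ⟨rfl, h2⟩)
    · -- contraction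
      have heind : N.Indep {e} := by
        rw [hNI]
        refine ⟨singleton_subset_iff.mpr heE', by rw [Set.ncard_singleton]; omega, fun h => ?_, fun h => ?_⟩
        · have hle := Set.ncard_le_ncard h (finite_singleton e)
          rw [hc1, Set.ncard_singleton] at hle
          omega
        · have hle := Set.ncard_le_ncard h (finite_singleton e)
          rw [hc2, Set.ncard_singleton] at hle
          omega
      apply key_laminar (k := r - 1)
        (𝒟 := {D | (D = C₁ \ {e} ∧ e ∈ C₁) ∨ (D = C₂ \ {e} ∧ e ∈ C₂)})
      · have hg : (N.con {e}).E = N.E \ {e} := rfl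
        rw [hg]
        exact hEfin.diff
      · rintro D (⟨rfl, h1⟩ | ⟨rfl, h1⟩) D' (⟨rfl, h2⟩ | ⟨rfl, h2⟩) hne
        · rfl
        · exfalso
          obtain ⟨z, hz⟩ := hne
          have hzp : z ∈ C₁ ∩ C₂ := ⟨hz.1.1, hz.2.1⟩
          have hep : e ∈ C₁ ∩ C₂ := ⟨h1, h2⟩
          rw [hp] at hzp hep
          exact hz.1.2 (by rw [hzp, ← hep]; rfl)
        · exfalso
          obtain ⟨z, hz⟩ := hne
          have hzp : z ∈ C₁ ∩ C₂ := ⟨hz.2.1, hz.1.1⟩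
          have hep : e ∈ C₁ ∩ C₂ := ⟨h2, h1⟩
          rw [hp] at hzp hep
          exact hz.1.2 (by rw [hzp, ← hep]; rfl)
        · rfl
      · intro I
        have hg : (N.con {e}).E = N.E \ {e} := rfl
        rw [hg, con_indep_iff heind, hNI]
        constructor
        · rintro ⟨hIe, hsub, hcard, h1, h2⟩
          have heI : e ∉ I := fun h => (hIe h).2 rfl
          have hIfin : I.Finite := hEfin.subset fun x hx => (hIe hx).1
          have hcard' : I.ncard ≤ r - 1 := by
            rw [Set.ncard_insert_of_notMem heI hIfin] at hcard
            omega
          refine ⟨hIe, hcard', ?_⟩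
          rintro D (⟨rfl, -⟩ | ⟨rfl, -⟩) hDI
          · refine h1 fun x hx => ?_
            by_cases hxe : x = e
            · exact hxe ▸ mem_insert e I
            · exact mem_insert_iff.mpr (Or.inr (hDI ⟨hx, by simp [hxe]⟩))
          · refine h2 fun x hx => ?_
            by_cases hxe : x = e
            · exact hxe ▸ mem_insert e I
            · exact mem_insert_iff.mpr (Or.inr (hDI ⟨hx, by simp [hxe]⟩))
        · rintro ⟨hIe, hcard, hD⟩
          have heI : e ∉ I := fun h => (hIe h).2 rfl
          have hIfin : I.Finite := hEfin.subset fun x hx => (hIe hx).1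
          refine ⟨hIe, insert_subset heE' (fun x hx => hE ▸ (hIe hx).1), ?_, ?_, ?_⟩
          · rw [Set.ncard_insert_of_notMem heI hIfin]
            omega
          · intro h
            by_cases he1 : e ∈ C₁
            · exact hD (C₁ \ {e}) (Or.inl ⟨rfl, he1⟩)
                fun x hx => (mem_insert_iff.mp (h hx.1)).resolve_left
                  fun hh => hx.2 (by simp [hh])
            · have hC₁I : C₁ ⊆ I := fun x hx =>
                (mem_insert_iff.mp (h hx)).resolve_left fun hxe => he1 (hxe ▸ hx)
              have hle := Set.ncard_le_ncard hC₁I hIfin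
              rw [hc1] at hle
              omega
          · intro h
            by_cases he2 : e ∈ C₂
            · exact hD (C₂ \ {e}) (Or.inr ⟨rfl, he2⟩)
                fun x hx => (mem_insert_iff.mp (h hx.1)).resolve_left
                  fun hh => hx.2 (by simp [hh])
            · have hC₂I : C₂ ⊆ I := fun x hx =>
                (mem_insert_iff.mp (h hx)).resolve_left fun hxe => he2 (hxe ▸ hx)
              have hle := Set.ncard_le_ncard hC₂I hIfin
              rw [hc2] at hle
              omega
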